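/- Let D = conv{±e₁, ±e₂, ±e₃} ⊆ ℝ³ be the standard octahedron, and let Λ = {x ∈ ℤ³ : x₁ + x₂ + x₃ is even} be the sublattice of ℤ³ generated by the pairwise differences of the vertices of D. If Λ' is a full-rank lattice in ℝ³ containing Λ such that for any two distinct vectors s, t ∈ Λ' the interiors of D + s and D + t are disjoint, then Λ' = Λ. -/

import Mathlib

open Pointwise MeasureTheory

/-- The standard basis vector `eᵢ` of `ℝ³`. -/
noncomputable def stdVec (i : Fin 3) : EuclideanSpace ℝ (Fin 3) :=
  EuclideanSpace.single i (1 : ℝ)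

/-- The standard octahedron `conv {±e₁, ±e₂, ±e₃} ⊆ ℝ³`. -/
noncomputable def stdOctahedron : Set (EuclideanSpace ℝ (Fin 3)) :=
  convexHull ℝ {stdVec 0, -stdVec 0, stdVec 1, -stdVec 1, stdVec 2, -stdVec 2}

set_option linter.unreachableTactic false
set_option linter.unusedTactic false

lemma subset_oct :
    {y : EuclideanSpace ℝ (Fin 3) | |y 0| + |y 1| + |y 2| < 1} ⊆ stdOctahedron := by
  intro x hx
  simp only [Set.mem_setOf_eq] at hx
  set r : ℝ := 1 - (|x 0| + |x 1| + |x 2|) with hr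
  have hr0 : 0 ≤ r := by simp only [hr]; linarith
  set w : Fin 3 × Bool → ℝ := fun p =>
    (if p.2 then max (x p.1) 0 else max (-(x p.1)) 0) + (if p.1 = 0 then r/2 else 0) with hw
  set z : Fin 3 × Bool → EuclideanSpace ℝ (Fin 3) := fun p =>
    if p.2 then stdVec p.1 else -stdVec p.1 with hz
  have hconv : Convex ℝ stdOctahedron := convex_convexHull ℝ _
  have hzmem : ∀ p : Fin 3 × Bool, z p ∈ stdOctahedron := by
    rintro ⟨i, b⟩
    apply subset_convexHull
    fin_cases i <;> cases b <;> simp [hz]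
  have hwpos : ∀ p : Fin 3 × Bool, 0 ≤ w p := by
    rintro ⟨i, b⟩
    cases b <;> simp only [hw] <;> positivity
  have hwsum : ∑ p : Fin 3 × Bool, w p = 1 := by
    rw [Fintype.sum_prod_type]
    simp only [Fintype.sum_bool, hw]
    simp only [Fin.sum_univ_three, Fin.ext_iff]
    have h0 : ∀ t : ℝ, max t 0 + max (-t) 0 = |t| := fun t => by
      rcases le_total t 0 with h | h <;> simp [abs_of_nonpos, abs_of_nonneg, h,
        max_eq_left, max_eq_right] <;> cases abs_cases t <;> simp_all <;> linarith
    norm_num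
    linarith [h0 (x 0), h0 (x 1), h0 (x 2)]
  have hx_eq : x = ∑ p : Fin 3 × Bool, w p • z p := by
    rw [Fintype.sum_prod_type]
    simp only [Fintype.sum_bool, Fin.sum_univ_three]
    ext j
    simp only [hw, hz, stdVec, PiLp.add_apply, PiLp.smul_apply, PiLp.neg_apply,
      EuclideanSpace.single_apply, smul_eq_mul, if_true, if_false]
    fin_cases j <;> simp [Fin.ext_iff] <;> norm_num <;>
      linarith [max_zero_sub_max_neg_zero_eq_self (x 0),
        max_zero_sub_max_neg_zero_eq_self (x 1),
        max_zero_sub_max_neg_zero_eq_self (x 2)]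
  rw [hx_eq]
  exact hconv.sum_mem (fun p _ => hwpos p) hwsum (fun p _ => hzmem p)

lemma mem_interior_oct (x : EuclideanSpace ℝ (Fin 3))
    (hx : |x 0| + |x 1| + |x 2| < 1) : x ∈ interior stdOctahedron := by
  have hcont : Continuous fun y : EuclideanSpace ℝ (Fin 3) => |y 0| + |y 1| + |y 2| := by
    have h0 := (EuclideanSpace.proj (𝕜 := ℝ) (0 : Fin 3)).continuous
    have h1 := (EuclideanSpace.proj (𝕜 := ℝ) (1 : Fin 3)).continuous
    have h2 := (EuclideanSpace.proj (𝕜 := ℝ) (2 : Fin 3)).continuous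
    exact ((h0.abs.add h1.abs).add h2.abs)
  have hopen : IsOpen {y : EuclideanSpace ℝ (Fin 3) | |y 0| + |y 1| + |y 2| < 1} :=
    isOpen_lt hcont continuous_const
  exact interior_maximal subset_oct hopen hx

/-- auxiliary: the integer vector `(u 0, u 1, u 2)` as an element of `ℝ³`. -/
noncomputable def ivec (u : Fin 3 → ℤ) : EuclideanSpace ℝ (Fin 3) := WithLp.toLp 2 (fun i => (u i : ℝ))

lemma ivec_apply (u : Fin 3 → ℤ) (i : Fin 3) : ivec u i = (u i : ℝ) := rfl

/-- Let `Λ = {x ∈ ℤ³ : x₁ + x₂ + x₃ even}`. If `Λ'` is a full-rank lattice in `ℝ³`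
containing `Λ` such that the translates of the standard octahedron `D` by the vectors of
`Λ'` have pairwise disjoint interiors, then `Λ' = Λ`. -/
theorem stmt_15 (Λ Λ' : Submodule ℤ (EuclideanSpace ℝ (Fin 3)))
    (hΛ : (Λ : Set (EuclideanSpace ℝ (Fin 3))) =
      {x | ∃ y : Fin 3 → ℤ, (∀ i, x i = (y i : ℝ)) ∧ Even (y 0 + y 1 + y 2)})
    [DiscreteTopology Λ'] [IsZLattice ℝ Λ']
    (hle : Λ ≤ Λ')
    (h : ∀ s ∈ Λ', ∀ t ∈ Λ', s ≠ t →
      Disjoint (interior (s +ᵥ stdOctahedron)) (interior (t +ᵥ stdOctahedron))) :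
    Λ' = Λ := by
  have key : ∀ z ∈ Λ', |z 0| + |z 1| + |z 2| < 2 → z = 0 := by
    intro z hz hlt
    by_contra hz0
    have hd := h 0 (zero_mem Λ') z hz (fun he => hz0 he.symm)
    have hp : ∀ i, ((2⁻¹ : ℝ) • z) i = 2⁻¹ * z i := fun i => rfl
    have habs : |((2⁻¹:ℝ) • z) 0| + |((2⁻¹:ℝ) • z) 1| + |((2⁻¹:ℝ) • z) 2| < 1 := by
      simp only [hp, abs_mul]
      rw [abs_of_nonneg (by norm_num : (0:ℝ) ≤ 2⁻¹)]
      linarith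
    have hmem1 : (2⁻¹ : ℝ) • z ∈ interior ((0 : EuclideanSpace ℝ (Fin 3)) +ᵥ stdOctahedron) := by
      rw [zero_vadd]
      exact mem_interior_oct _ habs
    have hmem2 : (2⁻¹ : ℝ) • z ∈ interior (z +ᵥ stdOctahedron) := by
      rw [interior_vadd, Set.mem_vadd_set_iff_neg_vadd_mem]
      apply mem_interior_oct
      have hq : ∀ i, ((-z +ᵥ (2⁻¹:ℝ) • z)) i = -(z i) + 2⁻¹ * z i := fun i => rfl
      simp only [hq]
      have habs2 : ∀ i, |-(z i) + 2⁻¹ * z i| = 2⁻¹ * |z i| := by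
        intro i
        rw [show -(z i) + 2⁻¹ * z i = -(2⁻¹ * z i) by ring, abs_neg, abs_mul,
          abs_of_nonneg (by norm_num : (0:ℝ) ≤ 2⁻¹)]
      simp only [habs2]
      linarith
    exact Set.not_disjoint_iff.2 ⟨_, hmem1, hmem2⟩ hd
  have hmemΛ : ∀ y : Fin 3 → ℤ, Even (y 0 + y 1 + y 2) → ivec y ∈ Λ := by
    intro y hy
    rw [← SetLike.mem_coe, hΛ]
    exact ⟨y, fun i => rfl, hy⟩
  refine le_antisymm ?_ hle
  intro v hv
  set m0 : ℤ := ⌊v 0⌋ with hm0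
  set m1 : ℤ := ⌊v 1⌋ with hm1
  set m2 : ℤ := ⌊v 2⌋ with hm2
  set p : ℤ := (m0 + m1 + m2) % 2 with hpdef
  have hprange : p = 0 ∨ p = 1 := by omega
  set y : Fin 3 → ℤ := ![m0 - p, m1, m2] with hy
  have hyeven : Even (y 0 + y 1 + y 2) := by
    refine ⟨(m0 + m1 + m2) / 2, ?_⟩
    simp only [hy, Matrix.cons_val_zero, Matrix.cons_val_one, Matrix.head_cons]
    have hy2 : y 2 = m2 := rfl
    rw [hy] at hy2
    omega
  set lam : EuclideanSpace ℝ (Fin 3) := ivec y with hlamdef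
  have hlam : lam ∈ Λ := hmemΛ y hyeven
  set w : EuclideanSpace ℝ (Fin 3) := v - lam with hwdef
  have hwmem : w ∈ Λ' := sub_mem hv (hle hlam)
  have hw0 : w 0 = v 0 - ((m0 : ℝ) - p) := by
    show v 0 - ivec y 0 = _
    rw [ivec_apply]; simp [hy]
  have hw1 : w 1 = v 1 - m1 := by
    show v 1 - ivec y 1 = _
    rw [ivec_apply]; simp [hy]
  have hw2 : w 2 = v 2 - m2 := by
    show v 2 - ivec y 2 = _
    rw [ivec_apply]; simp [hy]
  have hfl0 : (m0 : ℝ) ≤ v 0 ∧ v 0 < m0 + 1 := ⟨Int.floor_le _, Int.lt_floor_add_one _⟩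
  have hfl1 : (m1 : ℝ) ≤ v 1 ∧ v 1 < m1 + 1 := ⟨Int.floor_le _, Int.lt_floor_add_one _⟩
  have hfl2 : (m2 : ℝ) ≤ v 2 ∧ v 2 < m2 + 1 := ⟨Int.floor_le _, Int.lt_floor_add_one _⟩
  have hprealrange : (0:ℝ) ≤ (p:ℝ) ∧ (p:ℝ) ≤ 1 := by
    rcases hprange with h' | h' <;> rw [h'] <;> norm_num
  have ha : 0 ≤ w 0 ∧ w 0 < 2 := by
    rw [hw0]; constructor <;> linarith [hfl0.1, hfl0.2, hprealrange.1, hprealrange.2]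
  have hb : 0 ≤ w 1 ∧ w 1 < 1 := by rw [hw1]; constructor <;> linarith [hfl1.1, hfl1.2]
  have hc : 0 ≤ w 2 ∧ w 2 < 1 := by rw [hw2]; constructor <;> linarith [hfl2.1, hfl2.2]
  have hsub : ∀ u : Fin 3 → ℤ, Even (u 0 + u 1 + u 2) → w - ivec u ∈ Λ' :=
    fun u hu => sub_mem hwmem (hle (hmemΛ u hu))
  have happly : ∀ (u : Fin 3 → ℤ) (i : Fin 3), (w - ivec u) i = w i - (u i : ℝ) :=
    fun u i => rfl
  have hcoord : ∀ (u : Fin 3 → ℤ) (i : Fin 3), w - ivec u = 0 → w i = (u i : ℝ) := by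
    intro u i hequ
    have h0 := congrArg (fun q : EuclideanSpace ℝ (Fin 3) => q i) hequ
    simp only at h0
    rw [happly] at h0
    have h0' : w i - (u i : ℝ) = 0 := h0
    linarith
  have key2 : ∀ u0 u1 u2 : ℤ, Even (u0 + u1 + u2) →
      |w 0 - u0| + |w 1 - u1| + |w 2 - u2| < 2 →
      w 0 = u0 ∧ w 1 = u1 ∧ w 2 = u2 := by
    intro u0 u1 u2 hu hlt
    have hev : (![u0,u1,u2] : Fin 3 → ℤ) 0 + ![u0,u1,u2] 1 + ![u0,u1,u2] 2 = u0 + u1 + u2 := by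
      simp [Matrix.cons_val_zero, Matrix.cons_val_one, Matrix.head_cons]
    have hmm := hsub ![u0,u1,u2] (by rw [hev]; exact hu)
    have e0 : ((![u0,u1,u2] : Fin 3 → ℤ) 0 : ℝ) = u0 := by norm_num
    have e1 : ((![u0,u1,u2] : Fin 3 → ℤ) 1 : ℝ) = u1 := by norm_num
    have e2 : ((![u0,u1,u2] : Fin 3 → ℤ) 2 : ℝ) = u2 := rfl
    have heq := key _ hmm (by rw [happly, happly, happly, e0, e1, e2]; exact hlt)
    exact ⟨by rw [hcoord _ 0 heq, e0], by rw [hcoord _ 1 heq, e1], by rw [hcoord _ 2 heq, e2]⟩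
  have hwzero : w = 0 := by
    rcases lt_or_ge (|w 0| + |w 1| + |w 2|) 2 with hlt | hge
    · exact key w hwmem hlt
    · exfalso
      rw [abs_of_nonneg ha.1, abs_of_nonneg hb.1, abs_of_nonneg hc.1] at hge
      have H1 : ¬ (|w 0 - (2:ℤ)| + |w 1 - (0:ℤ)| + |w 2 - (0:ℤ)| < 2) := by
        intro hcon
        have := (key2 2 0 0 (by decide) hcon).1
        rw [this] at ha; norm_num at ha
      have H2 : ¬ (|w 0 - (0:ℤ)| + |w 1 - (1:ℤ)| + |w 2 - (1:ℤ)| < 2) := by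
        intro hcon
        have := (key2 0 1 1 (by decide) hcon).2.1
        rw [this] at hb; norm_num at hb
      have H3 : ¬ (|w 0 - (1:ℤ)| + |w 1 - (0:ℤ)| + |w 2 - (1:ℤ)| < 2) := by
        intro hcon
        have := (key2 1 0 1 (by decide) hcon).2.2
        rw [this] at hc; norm_num at hc
      push_neg at H1 H2 H3
      rw [abs_of_nonpos (by push_cast; linarith [ha.2]), (by push_cast; ring_nf : w 1 - ((0:ℤ):ℝ) = w 1), (by push_cast; ring_nf : w 2 - ((0:ℤ):ℝ) = w 2),
        abs_of_nonneg hb.1, abs_of_nonneg hc.1] at H1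
      rw [(by push_cast; ring_nf : w 0 - ((0:ℤ):ℝ) = w 0), abs_of_nonneg ha.1,
        abs_of_nonpos (by push_cast; linarith [hb.2]), abs_of_nonpos (by push_cast; linarith [hc.2])] at H2
      push_cast at H1 H2
      have hw0ge1 : 1 ≤ w 0 := by linarith
      rw [abs_of_nonneg (by push_cast; linarith : (0:ℝ) ≤ w 0 - ((1:ℤ):ℝ)),
        (by push_cast; ring_nf : w 1 - ((0:ℤ):ℝ) = w 1), abs_of_nonneg hb.1,
        abs_of_nonpos (by push_cast; linarith [hc.2])] at H3
      push_cast at H3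
      linarith [hb.2]
  have hveq : v = lam := by
    have h' := hwzero
    rw [hwdef, sub_eq_zero] at h'
    exact h'
  rw [hveq]
  exact hlam
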